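/- Let X ⊂ ℝ^d be compact and P a distribution on X × Y with an envelope of order γ > 0 and Tsybakov noise exponent q ∈ [0,∞). Then P has geometric noise exponent (q+1)γ/d if q ≥ 1, and geometric noise exponent α for every α < (q+1)γ/d if 0 ≤ q < 1. -/

import Mathlib

open MeasureTheory Metric

/-- The distance `τ_x` of a point to the union of the set `{η = 1/2}` and the opposite class. -/
noncomputable def tauDist {d : ℕ} (X : Set (EuclideanSpace ℝ (Fin d)))
    (η : EuclideanSpace ℝ (Fin d) → ℝ) (x : EuclideanSpace ℝ (Fin d)) : ℝ :=
  if η x < 1 / 2 then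
    infDist x ({z ∈ X | η z = 1 / 2} ∪ {z ∈ X | 1 / 2 < η z})
  else if 1 / 2 < η x then
    infDist x ({z ∈ X | η z = 1 / 2} ∪ {z ∈ X | η z < 1 / 2})
  else 0

/-- `P` has geometric noise exponent `α`:
`∫_X |2η-1| exp(-τ_x²/t) dP_X ≤ C t^{αd/2}` for all `t > 0`. -/
def HasGeomNoiseExponent {d : ℕ} (X : Set (EuclideanSpace ℝ (Fin d)))
    (μ : Measure (EuclideanSpace ℝ (Fin d))) (η : EuclideanSpace ℝ (Fin d) → ℝ)
    (α : ℝ) : Prop :=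
  ∃ C : ℝ, 0 < C ∧ ∀ t : ℝ, 0 < t →
    ∫ x in X, |2 * η x - 1| * Real.exp (-(tauDist X η x) ^ 2 / t) ∂μ ≤
      C * t ^ (α * d / 2)

open Set Real
open scoped ENNReal

lemma geom_noise_key {E : Type*} [MeasurableSpace E] (μ : Measure E) [IsProbabilityMeasure μ]
    (f g : E → ℝ) (hf : Measurable f) (hg : Measurable g)
    (hf0 : ∀ x, 0 ≤ f x) (hg0 : ∀ x, 0 ≤ g x)
    (γ cγ C q : ℝ) (hγ : 0 < γ) (hcγ : 0 < cγ) (hC : 0 < C) (hq0 : 0 ≤ q)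
    (henv : ∀ᵐ x ∂μ, f x ≤ cγ * g x ^ γ)
    (htsy : ∀ s : ℝ, 0 < s → (μ {x | f x ≤ s}).toReal ≤ C * s ^ q) :
    ∀ t : ℝ, 0 < t → ∫ x, f x * Real.exp (-g x ^ 2 / t) ∂μ ≤
      (C * cγ ^ (q + 1) * Real.Gamma ((q + 1) * γ / 2 + 1)) * t ^ ((q + 1) * γ / 2) := by
  have hγ' : γ ≠ 0 := hγ.ne'
  set β : ℝ := (q + 1) * γ / 2 with hβ
  have hβpos : 0 < β := by rw [hβ]; positivity
  set p : ℝ := 2 / γ with hp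
  have hppos : 0 < p := by rw [hp]; positivity
  have hfp : Measurable fun x => f x ^ p :=
    (Real.continuous_rpow_const hppos.le).measurable.comp hf
  intro t ht
  set a : ℝ := 1 / (cγ ^ p * t) with ha
  have hapos : 0 < a := by rw [ha]; positivity
  have hmeas : Measurable fun x => f x * Real.exp (-g x ^ 2 / t) :=
    hf.mul (Real.continuous_exp.measurable.comp ((hg.pow_const 2).neg.div_const t))
  have hnn : ∀ x, 0 ≤ f x * Real.exp (-g x ^ 2 / t) :=
    fun x => mul_nonneg (hf0 x) (Real.exp_pos _).le
  rw [integral_eq_lintegral_of_nonneg_ae (Filter.Eventually.of_forall hnn)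
    hmeas.aestronglyMeasurable]
  refine ENNReal.toReal_le_of_le_ofReal (by positivity) ?_
  -- Step A : use the envelope
  have stepA : ∫⁻ x, ENNReal.ofReal (f x * Real.exp (-g x ^ 2 / t)) ∂μ ≤
      ∫⁻ x, ENNReal.ofReal (f x * Real.exp (-(a * f x ^ p))) ∂μ := by
    refine lintegral_mono_ae ?_
    filter_upwards [henv] with x hx
    refine ENNReal.ofReal_le_ofReal (mul_le_mul_of_nonneg_left ?_ (hf0 x))
    refine Real.exp_le_exp.mpr ?_
    have h1 : f x ^ p ≤ cγ ^ p * g x ^ 2 := by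
      calc f x ^ p ≤ (cγ * g x ^ γ) ^ p := Real.rpow_le_rpow (hf0 x) hx hppos.le
        _ = cγ ^ p * (g x ^ γ) ^ p := Real.mul_rpow hcγ.le (Real.rpow_nonneg (hg0 x) γ)
        _ = cγ ^ p * g x ^ (γ * p) := by rw [← Real.rpow_mul (hg0 x)]
        _ = cγ ^ p * g x ^ (2 : ℝ) := by rw [hp]; field_simp
        _ = cγ ^ p * g x ^ 2 := by rw [Real.rpow_two]
    have h2 : a * (cγ ^ p * g x ^ 2) = g x ^ 2 / t := by
      rw [ha]; field_simp
    have h3 : a * f x ^ p ≤ g x ^ 2 / t := by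
      rw [← h2]; exact mul_le_mul_of_nonneg_left h1 hapos.le
    rw [neg_div]
    linarith
  -- integral of the exponential density over a tail
  have exp_int : ∀ s : ℝ, ∫⁻ u in Ioi s, ENNReal.ofReal (a * Real.exp (-(a * u))) =
      ENNReal.ofReal (Real.exp (-(a * s))) := by
    intro s
    rw [← ofReal_integral_eq_lintegral_ofReal]
    · congr 1
      have h4 : ∫ u in Ioi s, Real.exp (-(a * u)) = a⁻¹ * Real.exp (-(a * s)) := by
        have h5 := integral_comp_mul_left_Ioi (fun x => Real.exp (-x)) s hapos
        simpa [integral_exp_neg_Ioi, integral_exp_Iic, smul_eq_mul] using h5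
      rw [MeasureTheory.integral_const_mul, h4]
      field_simp
    · have := (exp_neg_integrableOn_Ioi s hapos).const_mul a
      simpa [neg_mul] using this
    · exact Filter.Eventually.of_forall fun u => by positivity
  -- the majorant kernel
  set c : ℝ → ℝ≥0∞ := fun u => ENNReal.ofReal (u ^ (γ / 2) * (a * Real.exp (-(a * u))))
    with hc
  have hcmeas : Measurable c := by
    refine Measurable.ennreal_ofReal ?_
    exact ((Real.continuous_rpow_const (by positivity)).mul
      (continuous_const.mul (Real.continuous_exp.comp (continuous_const.mul continuous_id).neg))).measurable
  -- Step B : pointwise domination by an integral in u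
  have stepB : ∀ x, ENNReal.ofReal (f x * Real.exp (-(a * f x ^ p))) ≤
      ∫⁻ u in Ioi (0 : ℝ), (Ioi (f x ^ p)).indicator c u := by
    intro x
    have hfxp : (0 : ℝ) ≤ f x ^ p := Real.rpow_nonneg (hf0 x) p
    have hrw : ∫⁻ u in Ioi (0 : ℝ), (Ioi (f x ^ p)).indicator c u =
        ∫⁻ u in Ioi (f x ^ p), c u := by
      rw [lintegral_indicator measurableSet_Ioi,
        Measure.restrict_restrict measurableSet_Ioi, Ioi_inter_Ioi,
        max_eq_left hfxp]
    rw [hrw]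
    calc ENNReal.ofReal (f x * Real.exp (-(a * f x ^ p)))
        = ENNReal.ofReal (f x) * ENNReal.ofReal (Real.exp (-(a * f x ^ p))) :=
          ENNReal.ofReal_mul (hf0 x)
      _ = ENNReal.ofReal (f x) *
          ∫⁻ u in Ioi (f x ^ p), ENNReal.ofReal (a * Real.exp (-(a * u))) := by
          rw [exp_int (f x ^ p)]
      _ = ∫⁻ u in Ioi (f x ^ p),
            ENNReal.ofReal (f x) * ENNReal.ofReal (a * Real.exp (-(a * u))) :=
          (lintegral_const_mul' _ _ ENNReal.ofReal_ne_top).symm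
      _ = ∫⁻ u in Ioi (f x ^ p), ENNReal.ofReal (f x * (a * Real.exp (-(a * u)))) := by
          simp_rw [← ENNReal.ofReal_mul (hf0 x)]
      _ ≤ ∫⁻ u in Ioi (f x ^ p), c u := by
          refine setLIntegral_mono' measurableSet_Ioi fun u hu => ?_
          refine ENNReal.ofReal_le_ofReal (mul_le_mul_of_nonneg_right ?_ (by positivity))
          have h6 : (f x ^ p) ^ (γ / 2) ≤ u ^ (γ / 2) :=
            Real.rpow_le_rpow hfxp (le_of_lt hu) (by positivity)
          calc f x = f x ^ (p * (γ / 2)) := by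
                rw [hp]; rw [show 2 / γ * (γ / 2) = 1 by field_simp, Real.rpow_one]
            _ = (f x ^ p) ^ (γ / 2) := Real.rpow_mul (hf0 x) _ _
            _ ≤ u ^ (γ / 2) := h6
  -- the swapped kernel is measurable
  have hker : Measurable fun z : E × ℝ => (Ioi (f z.1 ^ p)).indicator c z.2 := by
    have heq : (fun z : E × ℝ => (Ioi (f z.1 ^ p)).indicator c z.2) =
        ({z : E × ℝ | f z.1 ^ p < z.2}).indicator fun z => c z.2 := by
      funext z
      simp [Set.indicator_apply, Set.mem_Ioi, Set.mem_setOf_eq]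
    rw [heq]
    refine Measurable.indicator (hcmeas.comp measurable_snd) ?_
    exact measurableSet_lt (hfp.comp measurable_fst) measurable_snd
  -- put everything together
  have main : ∫⁻ x, ENNReal.ofReal (f x * Real.exp (-(a * f x ^ p))) ∂μ ≤
      ∫⁻ u in Ioi (0 : ℝ), c u * μ {x | f x ^ p < u} := by
    calc ∫⁻ x, ENNReal.ofReal (f x * Real.exp (-(a * f x ^ p))) ∂μ
        ≤ ∫⁻ x, (∫⁻ u in Ioi (0 : ℝ), (Ioi (f x ^ p)).indicator c u) ∂μ :=
          lintegral_mono fun x => stepB x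
      _ = ∫⁻ u in Ioi (0 : ℝ), ∫⁻ x, (Ioi (f x ^ p)).indicator c u ∂μ :=
          lintegral_lintegral_swap hker.aemeasurable
      _ = ∫⁻ u in Ioi (0 : ℝ), c u * μ {x | f x ^ p < u} := by
          refine lintegral_congr fun u => ?_
          have heq2 : (fun x => (Ioi (f x ^ p)).indicator c u) =
              ({x | f x ^ p < u}).indicator fun _ => c u := by
            funext x
            simp [Set.indicator_apply, Set.mem_Ioi, Set.mem_setOf_eq]
          rw [heq2, lintegral_indicator_const (measurableSet_lt hfp measurable_const)]
  -- bound the measure using the Tsybakov condition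
  have tsyb : ∀ u : ℝ, 0 < u → (μ {x | f x ^ p < u} : ℝ≥0∞) ≤
      ENNReal.ofReal (C * u ^ (γ / 2 * q)) := by
    intro u hu
    have hsub : {x | f x ^ p < u} ⊆ {x | f x ≤ u ^ (γ / 2)} := by
      intro x hx
      have h6 : (f x ^ p) ^ (γ / 2) ≤ u ^ (γ / 2) :=
        Real.rpow_le_rpow (Real.rpow_nonneg (hf0 x) p) (le_of_lt hx) (by positivity)
      have h7 : (f x ^ p) ^ (γ / 2) = f x := by
        rw [← Real.rpow_mul (hf0 x), hp, show 2 / γ * (γ / 2) = 1 by field_simp,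
          Real.rpow_one]
      exact Set.mem_setOf_eq ▸ (h7 ▸ h6)
    have hspos : (0 : ℝ) < u ^ (γ / 2) := Real.rpow_pos_of_pos hu _
    have h8 := htsy (u ^ (γ / 2)) hspos
    have h9 : (u ^ (γ / 2)) ^ q = u ^ (γ / 2 * q) := (Real.rpow_mul hu.le _ _).symm
    calc (μ {x | f x ^ p < u} : ℝ≥0∞) ≤ μ {x | f x ≤ u ^ (γ / 2)} := measure_mono hsub
      _ = ENNReal.ofReal (μ {x | f x ≤ u ^ (γ / 2)}).toReal :=
          (ENNReal.ofReal_toReal (measure_ne_top μ _)).symm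
      _ ≤ ENNReal.ofReal (C * u ^ (γ / 2 * q)) := by
          refine ENNReal.ofReal_le_ofReal ?_
          rw [← h9]; exact h8
  -- bound the u-integral
  have hbound : ∫⁻ u in Ioi (0 : ℝ), c u * μ {x | f x ^ p < u} ≤
      ∫⁻ u in Ioi (0 : ℝ), ENNReal.ofReal (C * a * (u ^ β * Real.exp (-(a * u)))) := by
    refine setLIntegral_mono' measurableSet_Ioi fun u hu => ?_
    rw [Set.mem_Ioi] at hu
    calc c u * μ {x | f x ^ p < u}
        ≤ ENNReal.ofReal (u ^ (γ / 2) * (a * Real.exp (-(a * u)))) *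
            ENNReal.ofReal (C * u ^ (γ / 2 * q)) :=
          mul_le_mul_right (tsyb u hu) _
      _ = ENNReal.ofReal ((u ^ (γ / 2) * (a * Real.exp (-(a * u)))) *
            (C * u ^ (γ / 2 * q))) :=
          (ENNReal.ofReal_mul (by positivity)).symm
      _ = ENNReal.ofReal (C * a * (u ^ β * Real.exp (-(a * u)))) := by
          congr 1
          have hcomb : u ^ (γ / 2) * u ^ (γ / 2 * q) = u ^ β := by
            rw [← Real.rpow_add hu, hβ]; ring_nf
          rw [← hcomb]; ring
  -- compute the Gamma integral
  have hint : IntegrableOn (fun u : ℝ => u ^ β * Real.exp (-(a * u))) (Ioi 0) := by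
    have h10 := integrableOn_rpow_mul_exp_neg_mul_rpow (s := β) (p := 1)
      (by linarith) one_pos hapos
    simpa [Real.rpow_one] using h10
  have hval : ∫ u in Ioi (0 : ℝ), u ^ β * Real.exp (-(a * u)) =
      (1 / a) ^ (β + 1) * Real.Gamma (β + 1) := by
    have h11 := Real.integral_rpow_mul_exp_neg_mul_Ioi
      (a := β + 1) (r := a) (by linarith) hapos
    simpa using h11
  have hgamma : ∫⁻ u in Ioi (0 : ℝ), ENNReal.ofReal (C * a * (u ^ β * Real.exp (-(a * u)))) =
      ENNReal.ofReal (C * a * ((1 / a) ^ (β + 1) * Real.Gamma (β + 1))) := by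
    have hCa : (0 : ℝ) ≤ C * a := by positivity
    simp_rw [ENNReal.ofReal_mul hCa]
    rw [lintegral_const_mul' _ _ ENNReal.ofReal_ne_top,
      ← ofReal_integral_eq_lintegral_ofReal hint ?_, hval]
    filter_upwards [self_mem_ae_restrict (measurableSet_Ioi : MeasurableSet (Ioi (0:ℝ)))]
      with u hu
    exact mul_nonneg (Real.rpow_nonneg (le_of_lt hu) _) (Real.exp_pos _).le
  -- final arithmetic
  have harith : C * a * ((1 / a) ^ (β + 1) * Real.Gamma (β + 1)) =
      C * cγ ^ (q + 1) * Real.Gamma (β + 1) * t ^ β := by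
    have hainv : 1 / a = cγ ^ p * t := by rw [ha]; field_simp
    have h12 : a * (1 / a) ^ (β + 1) = (1 / a) ^ β := by
      rw [Real.rpow_add (by positivity : (0:ℝ) < 1 / a), Real.rpow_one]
      field_simp
    have h13 : (1 / a) ^ β = cγ ^ (q + 1) * t ^ β := by
      rw [hainv, Real.mul_rpow (by positivity) ht.le, ← Real.rpow_mul hcγ.le]
      rw [hp, hβ, show 2 / γ * ((q + 1) * γ / 2) = q + 1 from by field_simp]
    calc C * a * ((1 / a) ^ (β + 1) * Real.Gamma (β + 1))
        = C * (a * (1 / a) ^ (β + 1)) * Real.Gamma (β + 1) := by ring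
      _ = C * (1 / a) ^ β * Real.Gamma (β + 1) := by rw [h12]
      _ = C * (cγ ^ (q + 1) * t ^ β) * Real.Gamma (β + 1) := by rw [h13]
      _ = C * cγ ^ (q + 1) * Real.Gamma (β + 1) * t ^ β := by ring
  calc ∫⁻ x, ENNReal.ofReal (f x * Real.exp (-g x ^ 2 / t)) ∂μ
      ≤ ∫⁻ x, ENNReal.ofReal (f x * Real.exp (-(a * f x ^ p))) ∂μ := stepA
    _ ≤ ∫⁻ u in Ioi (0 : ℝ), c u * μ {x | f x ^ p < u} := main
    _ ≤ ∫⁻ u in Ioi (0 : ℝ), ENNReal.ofReal (C * a * (u ^ β * Real.exp (-(a * u)))) := hbound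
    _ = ENNReal.ofReal (C * a * ((1 / a) ^ (β + 1) * Real.Gamma (β + 1))) := hgamma
    _ = ENNReal.ofReal (C * cγ ^ (q + 1) * Real.Gamma (β + 1) * t ^ β) := by rw [harith]

/-- Theorem 2.6: if `P` has an envelope of order `γ > 0` and Tsybakov noise exponent
`q ∈ [0,∞)` then it has geometric noise exponent `(q+1)γ/d` if `q ≥ 1`, and geometric noise
exponent `α` for every `0 < α < (q+1)γ/d` if `0 ≤ q < 1`. -/
theorem geom_noise_of_envelope_tsybakov {d : ℕ} (hd : 1 ≤ d)
    (X : Set (EuclideanSpace ℝ (Fin d))) (hX : IsCompact X)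
    (μ : Measure (EuclideanSpace ℝ (Fin d))) [IsProbabilityMeasure μ] (hsupp : μ Xᶜ = 0)
    (η : EuclideanSpace ℝ (Fin d) → ℝ) (hηm : Measurable η)
    (hη : ∀ x, η x ∈ Set.Icc (0 : ℝ) 1) (γ cγ C q : ℝ) (hγ : 0 < γ) (hcγ : 0 < cγ)
    (hC : 0 < C) (hq0 : 0 ≤ q)
    (henv : ∀ᵐ x ∂μ, |2 * η x - 1| ≤ cγ * tauDist X η x ^ γ)
    (htsy : ∀ s : ℝ, 0 < s → (μ {x | |2 * η x - 1| ≤ s}).toReal ≤ C * s ^ q) :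
    (1 ≤ q → HasGeomNoiseExponent X μ η ((q + 1) * γ / d)) ∧
    (q < 1 → ∀ α : ℝ, 0 < α → α < (q + 1) * γ / d → HasGeomNoiseExponent X μ η α) := by
  have hd0 : (0 : ℝ) < (d : ℝ) := by exact_mod_cast hd
  have hrestr : μ.restrict X = μ := by
    refine Measure.restrict_eq_self_of_ae_mem ?_
    have : ∀ᵐ x ∂μ, x ∉ Xᶜ := (ae_iff).mpr (by simpa [Set.compl_def] using hsupp)
    filter_upwards [this] with x hx using not_not.mp hx
  set f : EuclideanSpace ℝ (Fin d) → ℝ := fun x => |2 * η x - 1| with hfdef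
  have hf : Measurable f := ((measurable_const.mul hηm).sub measurable_const).abs
  have hf0 : ∀ x, 0 ≤ f x := fun x => abs_nonneg _
  have hf1 : ∀ x, f x ≤ 1 := by
    intro x
    rw [hfdef, abs_le]
    have := hη x
    constructor <;> [linarith [this.1]; linarith [this.2]]
  have hg : Measurable (tauDist X η) := by
    unfold tauDist
    refine Measurable.ite (hηm measurableSet_Iio) (continuous_infDist_pt _).measurable ?_
    exact Measurable.ite (measurableSet_lt measurable_const hηm)
      (continuous_infDist_pt _).measurable measurable_const
  have hg0 : ∀ x, 0 ≤ tauDist X η x := by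
    intro x; unfold tauDist
    split_ifs <;> first | exact infDist_nonneg | exact le_refl 0
  set β : ℝ := (q + 1) * γ / 2 with hβ
  set C0 : ℝ := C * cγ ^ (q + 1) * Real.Gamma (β + 1) with hC0
  have hC0pos : 0 < C0 := by
    rw [hC0]
    have := Real.Gamma_pos_of_pos (show (0:ℝ) < β + 1 by positivity)
    positivity
  have hkey : ∀ t : ℝ, 0 < t →
      ∫ x in X, f x * Real.exp (-(tauDist X η x) ^ 2 / t) ∂μ ≤ C0 * t ^ β := by
    intro t ht
    rw [hrestr]
    exact geom_noise_key μ f (tauDist X η) hf hg hf0 hg0 γ cγ C q hγ hcγ hC hq0 henv htsy t ht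
  -- trivial bound by 1
  have hone : ∀ t : ℝ, 0 < t →
      ∫ x in X, f x * Real.exp (-(tauDist X η x) ^ 2 / t) ∂μ ≤ 1 := by
    intro t ht
    rw [hrestr]
    have hbd : ∀ x, f x * Real.exp (-(tauDist X η x) ^ 2 / t) ≤ 1 := by
      intro x
      have he : Real.exp (-(tauDist X η x) ^ 2 / t) ≤ 1 := by
        rw [Real.exp_le_one_iff]
        have : (0:ℝ) ≤ (tauDist X η x) ^ 2 := sq_nonneg _
        rw [neg_div]
        simp only [Left.neg_nonpos_iff]
        positivity
      calc f x * Real.exp (-(tauDist X η x) ^ 2 / t) ≤ 1 * 1 :=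
        mul_le_mul (hf1 x) he (Real.exp_pos _).le zero_le_one
      _ = 1 := one_mul 1
    have hmeas : Measurable fun x => f x * Real.exp (-(tauDist X η x) ^ 2 / t) :=
      hf.mul (Real.continuous_exp.measurable.comp ((hg.pow_const 2).neg.div_const t))
    have hint : Integrable (fun x => f x * Real.exp (-(tauDist X η x) ^ 2 / t)) μ := by
      refine (integrable_const (1:ℝ)).mono' hmeas.aestronglyMeasurable ?_
      refine Filter.Eventually.of_forall fun x => ?_
      rw [Real.norm_eq_abs, abs_of_nonneg (mul_nonneg (hf0 x) (Real.exp_pos _).le)]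
      exact hbd x
    calc ∫ x, f x * Real.exp (-(tauDist X η x) ^ 2 / t) ∂μ ≤ ∫ _, (1:ℝ) ∂μ :=
        integral_mono hint (integrable_const 1) hbd
      _ = 1 := by simp
  constructor
  · intro _
    refine ⟨C0, hC0pos, fun t ht => ?_⟩
    have hexp : (q + 1) * γ / ↑d * ↑d / 2 = β := by
      rw [hβ]; field_simp
    rw [hexp]
    exact hkey t ht
  · intro _ α hα hαlt
    refine ⟨max C0 1, lt_max_of_lt_right one_pos, fun t ht => ?_⟩
    have hexple : α * d / 2 ≤ β := by
      rw [hβ]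
      have h1 : α * d ≤ (q + 1) * γ := by
        nlinarith [(lt_div_iff₀ hd0).mp hαlt]
      linarith
    rcases le_or_gt t 1 with hle | hgt
    · calc ∫ x in X, f x * Real.exp (-(tauDist X η x) ^ 2 / t) ∂μ ≤ C0 * t ^ β :=
          hkey t ht
        _ ≤ C0 * t ^ (α * d / 2) := by
          refine mul_le_mul_of_nonneg_left ?_ hC0pos.le
          exact Real.rpow_le_rpow_of_exponent_ge ht hle hexple
        _ ≤ max C0 1 * t ^ (α * d / 2) :=
          mul_le_mul_of_nonneg_right (le_max_left _ _) (Real.rpow_nonneg ht.le _)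
    · calc ∫ x in X, f x * Real.exp (-(tauDist X η x) ^ 2 / t) ∂μ ≤ 1 := hone t ht
        _ ≤ 1 * t ^ (α * d / 2) := by
          rw [one_mul]
          refine Real.one_le_rpow hgt.le ?_
          positivity
        _ ≤ max C0 1 * t ^ (α * d / 2) :=
          mul_le_mul_of_nonneg_right (le_max_right _ _) (Real.rpow_nonneg ht.le _)
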